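/- The restriction of ψ to Z(Ĝ) induces a group isomorphism Z(Ĝ)/ker ψ ≅ Z(G). -/

import Mathlib

/-- Abstract setting: `Ghat` is generated by the image of `g : X → Ghat`, `G` acts on `X`,
`ψ : Ghat →* G` is a surjective homomorphism with `w * g x * w⁻¹ = g (ψ w • x)`, and every
element of the center of `G` acts trivially on `X`.  Then the restriction of `ψ` to the
center of `Ghat` induces a group isomorphism `Z(Ghat)/ker ψ ≃* Z(G)`. -/
theorem center_quotient_ker_iso_center {Ghat G X : Type*} [Group Ghat] [Group G] [MulAction G X]
    (g : X → Ghat) (hgen : Subgroup.closure (Set.range g) = ⊤)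
    (ψ : Ghat →* G) (hsurj : Function.Surjective ψ)
    (hconj : ∀ (w : Ghat) (x : X), w * g x * w⁻¹ = g (ψ w • x))
    (hztriv : ∀ z ∈ Subgroup.center G, ∀ x : X, z • x = x) :
    ∃ e : (Subgroup.center Ghat) ⧸ (ψ.ker.subgroupOf (Subgroup.center Ghat)) ≃*
        Subgroup.center G,
      ∀ z : Subgroup.center Ghat, ((e (QuotientGroup.mk z)) : G) = ψ (z : Ghat) := by
  -- ψ maps the center into the center
  have hmaps : ∀ z : Subgroup.center Ghat, ψ (z : Ghat) ∈ Subgroup.center G := by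
    intro z
    rw [Subgroup.mem_center_iff]
    intro h
    obtain ⟨w, rfl⟩ := hsurj h
    rw [← map_mul, ← map_mul, (Subgroup.mem_center_iff.mp z.2 w)]
  set φ : Subgroup.center Ghat →* Subgroup.center G :=
    (ψ.domRestrict (Subgroup.center Ghat)).codRestrict (Subgroup.center G) hmaps with hφ
  have hφsurj : Function.Surjective φ := by
    rintro ⟨z, hz⟩
    obtain ⟨w, hw⟩ := hsurj z
    have hwc : w ∈ Subgroup.center Ghat := by
      rw [Subgroup.mem_center_iff]
      intro a
      have ha : a ∈ Subgroup.centralizer {w} := by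
        have : Subgroup.closure (Set.range g) ≤ Subgroup.centralizer {w} := by
          rw [Subgroup.closure_le]
          rintro _ ⟨x, rfl⟩
          show g x ∈ Subgroup.centralizer {w}
          rw [Subgroup.mem_centralizer_iff]
          intro s hs
          rw [Set.mem_singleton_iff] at hs
          subst hs
          have := hconj s x
          rw [hw, hztriv z hz x] at this
          calc s * g x = (s * g x * s⁻¹) * s := by group
            _ = g x * s := by rw [this]
        exact this (hgen ▸ Subgroup.mem_top a)
      exact (Subgroup.mem_centralizer_iff.mp ha w rfl).symm
    exact ⟨⟨w, hwc⟩, Subtype.ext hw⟩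
  have hker : φ.ker = ψ.ker.subgroupOf (Subgroup.center Ghat) := by
    ext z
    simp only [MonoidHom.mem_ker, Subgroup.mem_subgroupOf, Subtype.ext_iff, hφ,
      MonoidHom.codRestrict_apply, MonoidHom.restrict_apply, Subgroup.coe_one,
      MonoidHom.mem_ker]
    exact Iff.rfl
  refine ⟨(QuotientGroup.quotientMulEquivOfEq hker.symm).trans
    (QuotientGroup.quotientKerEquivOfSurjective φ hφsurj), fun z => ?_⟩
  rfl
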